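/- Fix an integer m ≥ 1 and a real p with 1 ≤ p < ∞. For x in C_p^G(Δ_G^m) set N_p(x) = ∑_{i=1}^m |log x_i| + (∑_{n=1}^∞ |(1/n) ∑_{k=1}^n Δ^m (log x)_k|^p)^{1/p}. Then N_p is a geometric norm on C_p^G(Δ_G^m): (1) N_p(x) ≥ 0 for all x in the space; (2) N_p(x) = 0 if and only if x_k = 1 for every k; (3) N_p of the sequence (exp(log a · log x_k)) equals |log a| · N_p(x) for every positive real a; (4) N_p of the pointwise product (x_k · z_k) is at most N_p(x) + N_p(z) for all x, z in the space. (Here N_p(x) = log ‖x‖_p^G, the logarithm of the geometric norm ‖x‖_p^G = exp N_p(x).) -/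
import Mathlib

open scoped ENNReal
set_option maxHeartbeats 1000000


/-- Classical `m`-th order forward difference
`Δ^m y_k = ∑_{v=0}^m (−1)^v C(m,v) y_{k+v}`. -/
noncomputable def fdiff (m : ℕ) (y : ℕ → ℝ) (k : ℕ) : ℝ :=
  ∑ v ∈ Finset.range (m + 1), (-1 : ℝ) ^ v * (m.choose v : ℝ) * y (k + v)

/-- The Cesàro mean `(1/n) ∑_{k=1}^n Δ^m (log x)_k`. -/
noncomputable def cesaro (m : ℕ) (x : ℕ → ℝ) (n : ℕ) : ℝ :=
  (1 / (n : ℝ)) * ∑ k ∈ Finset.Icc 1 n, fdiff m (fun j => Real.log (x j)) k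

/-- Membership in the bigeometric Cesàro difference space `C_p^G(Δ_G^m)`. -/
def memCpG (m : ℕ) (p : ℝ) (x : ℕ → ℝ) : Prop :=
  (∀ k, 1 ≤ k → 0 < x k) ∧ Summable (fun n : ℕ => |cesaro m x n| ^ p)

/-- Membership in the bigeometric Cesàro difference space `C_∞^G(Δ_G^m)`. -/
def memCinfG (m : ℕ) (x : ℕ → ℝ) : Prop :=
  (∀ k, 1 ≤ k → 0 < x k) ∧ ∃ C : ℝ, ∀ n : ℕ, |cesaro m x n| ≤ C

/-- `N_p(x) = log ‖x‖_p^G`, the logarithm of the geometric norm on `C_p^G(Δ_G^m)`. -/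
noncomputable def NpG (m : ℕ) (p : ℝ) (x : ℕ → ℝ) : ℝ :=
  (∑ i ∈ Finset.Icc 1 m, |Real.log (x i)|) +
    (∑' n : ℕ, |cesaro m x n| ^ p) ^ (1 / p)

/-- fdiff only depends on values from `k` on. -/
lemma fdiff_congr (m : ℕ) {y z : ℕ → ℝ} {k : ℕ} (h : ∀ j, k ≤ j → y j = z j) :
    fdiff m y k = fdiff m z k := by
  unfold fdiff
  exact Finset.sum_congr rfl fun v _ => by rw [h (k + v) (Nat.le_add_right _ _)]

lemma fdiff_add (m : ℕ) (y z : ℕ → ℝ) (k : ℕ) :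
    fdiff m (fun j => y j + z j) k = fdiff m y k + fdiff m z k := by
  unfold fdiff
  rw [← Finset.sum_add_distrib]
  exact Finset.sum_congr rfl fun v _ => by ring

lemma fdiff_smul (m : ℕ) (c : ℝ) (y : ℕ → ℝ) (k : ℕ) :
    fdiff m (fun j => c * y j) k = c * fdiff m y k := by
  unfold fdiff
  rw [Finset.mul_sum]
  exact Finset.sum_congr rfl fun v _ => by ring

lemma cesaro_mul (m : ℕ) (x z : ℕ → ℝ) (hx : ∀ k, 1 ≤ k → 0 < x k)
    (hz : ∀ k, 1 ≤ k → 0 < z k) (n : ℕ) :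
    cesaro m (fun k => x k * z k) n = cesaro m x n + cesaro m z n := by
  unfold cesaro
  rw [← mul_add, ← Finset.sum_add_distrib]
  congr 1
  refine Finset.sum_congr rfl fun k hk => ?_
  have hk1 : 1 ≤ k := (Finset.mem_Icc.mp hk).1
  rw [← fdiff_add]
  refine fdiff_congr m fun j hj => ?_
  have hj1 : 1 ≤ j := le_trans hk1 hj
  exact Real.log_mul (hx j hj1).ne' (hz j hj1).ne'

lemma cesaro_smul (m : ℕ) (x : ℕ → ℝ) (c : ℝ) (n : ℕ) :
    cesaro m (fun k => Real.exp (c * Real.log (x k))) n = c * cesaro m x n := by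
  unfold cesaro
  have h : ∑ k ∈ Finset.Icc 1 n, fdiff m
      (fun j => Real.log (Real.exp (c * Real.log (x j)))) k =
      c * ∑ k ∈ Finset.Icc 1 n, fdiff m (fun j => Real.log (x j)) k := by
    rw [Finset.mul_sum]
    refine Finset.sum_congr rfl fun k _ => ?_
    rw [← fdiff_smul]
    exact fdiff_congr m fun j _ => Real.log_exp _
  simp only [h]
  ring

lemma zero_of_fdiff_zero (m : ℕ) (y : ℕ → ℝ)
    (h0 : ∀ i, 1 ≤ i → i ≤ m → y i = 0)
    (hf : ∀ k, 1 ≤ k → fdiff m y k = 0) :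
    ∀ j, 1 ≤ j → y j = 0 := by
  intro j
  induction j using Nat.strong_induction_on with
  | _ j ih =>
    intro hj
    by_cases hjm : j ≤ m
    · exact h0 j hj hjm
    · push_neg at hjm
      set k := j - m with hk
      have hk1 : 1 ≤ k := Nat.le_sub_of_add_le (by omega)
      have hkm : k + m = j := by omega
      have hfk := hf k hk1
      unfold fdiff at hfk
      rw [Finset.sum_range_succ] at hfk
      have hzero : ∀ v ∈ Finset.range m,
          (-1 : ℝ) ^ v * (m.choose v : ℝ) * y (k + v) = 0 := by
        intro v hv
        have hvm : v < m := Finset.mem_range.mp hv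
        have : y (k + v) = 0 := ih (k + v) (by omega) (by omega)
        rw [this, mul_zero]
      rw [Finset.sum_eq_zero hzero, zero_add, Nat.choose_self, Nat.cast_one,
        mul_one, hkm] at hfk
      have hne : ((-1 : ℝ) ^ m) ≠ 0 := pow_ne_zero _ (by norm_num)
      exact (mul_eq_zero.mp hfk).resolve_left hne

/-- `N_p` is a (geometric) norm on `C_p^G(Δ_G^m)`. -/
theorem NpG_is_norm (m : ℕ) (hm : 1 ≤ m) (p : ℝ) (hp : 1 ≤ p) :
    (∀ x : ℕ → ℝ, memCpG m p x → 0 ≤ NpG m p x) ∧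
    (∀ x : ℕ → ℝ, memCpG m p x →
      (NpG m p x = 0 ↔ ∀ k, 1 ≤ k → x k = 1)) ∧
    (∀ x : ℕ → ℝ, memCpG m p x → ∀ a : ℝ, 0 < a →
      NpG m p (fun k => Real.exp (Real.log a * Real.log (x k))) =
        |Real.log a| * NpG m p x) ∧
    (∀ x z : ℕ → ℝ, memCpG m p x → memCpG m p z →
      NpG m p (fun k => x k * z k) ≤ NpG m p x + NpG m p z) := by
  have hp0 : 0 < p := lt_of_lt_of_le one_pos hp
  have hppos : p ≠ 0 := hp0.ne'
  have sum1_nonneg : ∀ x : ℕ → ℝ, 0 ≤ ∑ i ∈ Finset.Icc 1 m, |Real.log (x i)| :=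
    fun x => Finset.sum_nonneg fun i _ => abs_nonneg _
  have tsum_nonneg' : ∀ x : ℕ → ℝ, 0 ≤ ∑' n : ℕ, |cesaro m x n| ^ p :=
    fun x => tsum_nonneg fun n => Real.rpow_nonneg (abs_nonneg _) _
  have npg_nonneg : ∀ x : ℕ → ℝ, 0 ≤ NpG m p x := fun x =>
    add_nonneg (sum1_nonneg x) (Real.rpow_nonneg (tsum_nonneg' x) _)
  refine ⟨fun x _ => npg_nonneg x, ?_, ?_, ?_⟩
  · -- part 2
    intro x hx
    obtain ⟨hxpos, hxsum⟩ := hx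
    constructor
    · intro h
      unfold NpG at h
      have ha := sum1_nonneg x
      have hb := Real.rpow_nonneg (tsum_nonneg' x) (1 / p)
      have h1 : ∑ i ∈ Finset.Icc 1 m, |Real.log (x i)| = 0 ∧
          (∑' n : ℕ, |cesaro m x n| ^ p) ^ (1 / p) = 0 :=
        ⟨by linarith, by linarith⟩
      have hlog0 : ∀ i, 1 ≤ i → i ≤ m → Real.log (x i) = 0 := by
        intro i hi1 him
        have := (Finset.sum_eq_zero_iff_of_nonneg
          (fun i _ => abs_nonneg (Real.log (x i)))).mp h1.1 i
          (Finset.mem_Icc.mpr ⟨hi1, him⟩)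
        exact abs_eq_zero.mp this
      have hts : (∑' n : ℕ, |cesaro m x n| ^ p) = 0 := by
        by_contra hne
        have hpos : 0 < ∑' n : ℕ, |cesaro m x n| ^ p :=
          lt_of_le_of_ne (tsum_nonneg' x) (Ne.symm hne)
        have := Real.rpow_pos_of_pos hpos (1 / p)
        rw [h1.2] at this; exact lt_irrefl 0 this
      have hces : ∀ n, cesaro m x n = 0 := by
        intro n
        have hle : |cesaro m x n| ^ p ≤ 0 := by
          rw [← hts]
          exact Summable.le_tsum hxsum n fun j _ => Real.rpow_nonneg (abs_nonneg _) _
        have heq : |cesaro m x n| ^ p = 0 :=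
          le_antisymm hle (Real.rpow_nonneg (abs_nonneg _) _)
        have h2 : |cesaro m x n| = 0 := by
          by_contra hne
          have habs : 0 < |cesaro m x n| :=
            lt_of_le_of_ne (abs_nonneg _) (Ne.symm hne)
          exact absurd heq (Real.rpow_pos_of_pos habs p).ne'
        exact abs_eq_zero.mp h2
      -- partial sums are zero
      have hS : ∀ n : ℕ, ∑ k ∈ Finset.Icc 1 n, fdiff m (fun j => Real.log (x j)) k = 0 := by
        intro n
        rcases Nat.eq_zero_or_pos n with rfl | hn
        · simp
        · have := hces n
          unfold cesaro at this
          have hne : (1 / (n : ℝ)) ≠ 0 := by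
            simp [Nat.cast_ne_zero]; omega
          exact (mul_eq_zero.mp this).resolve_left hne
      have hfd : ∀ k, 1 ≤ k → fdiff m (fun j => Real.log (x j)) k = 0 := by
        intro k hk
        obtain ⟨b, rfl⟩ := Nat.exists_eq_add_of_le hk
        have h1 := hS (1 + b)
        have h2 := hS b
        rw [show 1 + b = b + 1 by omega, Finset.sum_Icc_succ_top (by omega : 1 ≤ b + 1),
          h2, zero_add] at h1
        rwa [show 1 + b = b + 1 by omega]
      have hy0 : ∀ j, 1 ≤ j → Real.log (x j) = 0 :=
        zero_of_fdiff_zero m _ hlog0 hfd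
      intro k hk
      have := hy0 k hk
      have hxk := hxpos k hk
      rw [← Real.exp_log hxk, this, Real.exp_zero]
    · intro h
      have hlog : ∀ j, 1 ≤ j → Real.log (x j) = 0 := fun j hj => by
        rw [h j hj, Real.log_one]
      have hces : ∀ n, cesaro m x n = 0 := by
        intro n
        unfold cesaro
        rw [Finset.sum_eq_zero, mul_zero]
        intro k hk
        have hk1 : 1 ≤ k := (Finset.mem_Icc.mp hk).1
        unfold fdiff
        refine Finset.sum_eq_zero fun v _ => ?_
        have hz : Real.log (x (k + v)) = 0 := hlog (k + v) (by omega)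
        simp [hz]
      unfold NpG
      rw [Finset.sum_eq_zero (fun i hi => by
        rw [hlog i (Finset.mem_Icc.mp hi).1, abs_zero])]
      rw [show (∑' n : ℕ, |cesaro m x n| ^ p) = 0 by
        rw [tsum_congr (fun n => by
          rw [hces n, abs_zero, Real.zero_rpow hppos] : ∀ n : ℕ,
            |cesaro m x n| ^ p = (0:ℝ)), tsum_zero]]
      rw [Real.zero_rpow (by positivity), add_zero]
  · -- part 3: homogeneity
    intro x hx a ha
    set c := Real.log a with hc
    unfold NpG
    have h1 : ∀ i : ℕ, |Real.log (Real.exp (c * Real.log (x i)))| = |c| * |Real.log (x i)| := by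
      intro i; rw [Real.log_exp, abs_mul]
    have h2 : ∀ n : ℕ, |cesaro m (fun k => Real.exp (c * Real.log (x k))) n| ^ p
        = |c| ^ p * |cesaro m x n| ^ p := by
      intro n
      rw [cesaro_smul, abs_mul, Real.mul_rpow (abs_nonneg _) (abs_nonneg _)]
    simp only [h1, h2]
    rw [tsum_mul_left, ← Finset.mul_sum,
      Real.mul_rpow (Real.rpow_nonneg (abs_nonneg _) _) (tsum_nonneg' x)]
    have h3 : (|c| ^ p) ^ (1 / p) = |c| := by
      rw [← Real.rpow_mul (abs_nonneg c), mul_one_div_cancel hppos, Real.rpow_one]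
    rw [h3]
    ring
  · -- part 4: triangle inequality
    intro x z hx hz
    obtain ⟨hxpos, hxsum⟩ := hx
    obtain ⟨hzpos, hzsum⟩ := hz
    have hces : ∀ n, cesaro m (fun k => x k * z k) n = cesaro m x n + cesaro m z n :=
      cesaro_mul m x z hxpos hzpos
    unfold NpG
    have hlog : ∀ i : ℕ, 1 ≤ i →
        |Real.log (x i * z i)| ≤ |Real.log (x i)| + |Real.log (z i)| := by
      intro i hi
      rw [Real.log_mul (hxpos i hi).ne' (hzpos i hi).ne']
      exact abs_add_le _ _
    have hsum1 : ∑ i ∈ Finset.Icc 1 m, |Real.log (x i * z i)| ≤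
        (∑ i ∈ Finset.Icc 1 m, |Real.log (x i)|) + ∑ i ∈ Finset.Icc 1 m, |Real.log (z i)| := by
      rw [← Finset.sum_add_distrib]
      exact Finset.sum_le_sum fun i hi => hlog i (Finset.mem_Icc.mp hi).1
    -- Minkowski via lp spaces
    set P : ℝ≥0∞ := ENNReal.ofReal p with hP
    have hPt : P.toReal = p := ENNReal.toReal_ofReal hp0.le
    haveI : Fact (1 ≤ P) := ⟨by
      rw [hP, ← ENNReal.ofReal_one]
      exact ENNReal.ofReal_le_ofReal hp⟩
    have hPt0 : 0 < P.toReal := by rw [hPt]; exact hp0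
    have hFmem : Memℓp (fun n : ℕ => cesaro m x n) P := by
      apply memℓp_gen
      rw [hPt]
      simpa [Real.norm_eq_abs] using hxsum
    have hGmem : Memℓp (fun n : ℕ => cesaro m z n) P := by
      apply memℓp_gen
      rw [hPt]
      simpa [Real.norm_eq_abs] using hzsum
    set F : lp (fun _ : ℕ => ℝ) P := ⟨fun n => cesaro m x n, hFmem⟩ with hF
    set G : lp (fun _ : ℕ => ℝ) P := ⟨fun n => cesaro m z n, hGmem⟩ with hG
    have hFGapp : ∀ n : ℕ, (F + G) n = cesaro m x n + cesaro m z n := fun n => rfl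
    have hnF : ‖F‖ = (∑' n : ℕ, |cesaro m x n| ^ p) ^ (1 / p) := by
      rw [lp.norm_eq_tsum_rpow hPt0, hPt]
      rfl
    have hnG : ‖G‖ = (∑' n : ℕ, |cesaro m z n| ^ p) ^ (1 / p) := by
      rw [lp.norm_eq_tsum_rpow hPt0, hPt]
      rfl
    have hnFG : ‖F + G‖ = (∑' n : ℕ, |cesaro m (fun k => x k * z k) n| ^ p) ^ (1 / p) := by
      rw [lp.norm_eq_tsum_rpow hPt0, hPt]
      congr 1
      refine tsum_congr fun n => ?_
      rw [hFGapp n, ← hces n]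
      rfl
    have htri : ‖F + G‖ ≤ ‖F‖ + ‖G‖ := norm_add_le F G
    rw [hnF, hnG, hnFG] at htri
    linarith
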